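/- The derived Lie algebra [G,G] of the Goldman Lie algebra G of the torus over ℤ equals the ℤ-submodule spanned by the elements gcd(i,j)·e_{(i,j)} for all (i,j) ∈ ℤ² with (i,j) ≠ (0,0). -/

import Mathlib

noncomputable def gb (x y : (ℤ × ℤ) →₀ ℤ) : (ℤ × ℤ) →₀ ℤ :=
  x.sum fun p a => y.sum fun q b =>
    Finsupp.single (p.1 + q.1, p.2 + q.2) (a * b * (p.1 * q.2 - p.2 * q.1))

noncomputable def e (p : ℤ × ℤ) : (ℤ × ℤ) →₀ ℤ := Finsupp.single p 1

lemma gb_single (p q : ℤ × ℤ) :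
    gb (e p) (e q) = Finsupp.single (p.1 + q.1, p.2 + q.2) (p.1 * q.2 - p.2 * q.1) := by
  unfold gb e
  rw [Finsupp.sum_single_index (by simp), Finsupp.sum_single_index (by simp)]
  congr 1
  ring

theorem goldman_derived :
    Submodule.span ℤ {z : (ℤ × ℤ) →₀ ℤ | ∃ x y, z = gb x y} =
    Submodule.span ℤ {z : (ℤ × ℤ) →₀ ℤ |
      ∃ p : ℤ × ℤ, p ≠ 0 ∧ z = (Int.gcd p.1 p.2 : ℤ) • e p} := by
  apply le_antisymm
  · rw [Submodule.span_le]
    rintro z ⟨x, y, rfl⟩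
    rw [gb]
    apply Submodule.sum_mem
    intro p _
    apply Submodule.sum_mem
    intro q _
    show Finsupp.single ((p.1 + q.1, p.2 + q.2) : ℤ × ℤ)
        (x p * y q * (p.1 * q.2 - p.2 * q.1)) ∈ _
    by_cases hr : ((p.1 + q.1, p.2 + q.2) : ℤ × ℤ) = 0
    · have h1 : p.1 + q.1 = 0 := congrArg Prod.fst hr
      have h2 : p.2 + q.2 = 0 := congrArg Prod.snd hr
      have hq1 : q.1 = -p.1 := by linarith
      have hq2 : q.2 = -p.2 := by linarith
      have hd : x p * y q * (p.1 * q.2 - p.2 * q.1) = 0 := by rw [hq1, hq2]; ring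
      rw [hd, Finsupp.single_zero]
      exact Submodule.zero_mem _
    · have hdvd : ((Int.gcd (p.1 + q.1) (p.2 + q.2) : ℤ)) ∣ (p.1 * q.2 - p.2 * q.1) := by
        have he : p.1 * q.2 - p.2 * q.1 = p.1 * (p.2 + q.2) - p.2 * (p.1 + q.1) := by ring
        rw [he]
        exact Dvd.dvd.sub (Dvd.dvd.mul_left (Int.gcd_dvd_right _ _) p.1)
          (Dvd.dvd.mul_left (Int.gcd_dvd_left _ _) p.2)
      obtain ⟨k, hk⟩ := hdvd
      have heq : Finsupp.single ((p.1 + q.1, p.2 + q.2) : ℤ × ℤ)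
          (x p * y q * (p.1 * q.2 - p.2 * q.1)) =
          (x p * y q * k) • ((Int.gcd (p.1 + q.1) (p.2 + q.2) : ℤ) •
            e ((p.1 + q.1, p.2 + q.2) : ℤ × ℤ)) := by
        rw [hk]
        simp only [e, Finsupp.smul_single, smul_eq_mul, mul_one]
        congr 1
        ring
      rw [heq]
      exact Submodule.smul_mem _ _
        (Submodule.subset_span ⟨((p.1 + q.1, p.2 + q.2) : ℤ × ℤ), hr, rfl⟩)
  · rw [Submodule.span_le]
    rintro z ⟨r, hr, rfl⟩
    set a := Int.gcdA r.1 r.2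
    set b := Int.gcdB r.1 r.2
    have hbez : (Int.gcd r.1 r.2 : ℤ) = r.1 * a + r.2 * b := Int.gcd_eq_gcd_ab r.1 r.2
    apply Submodule.subset_span
    refine ⟨e (b, -a), e (r.1 - b, r.2 + a), ?_⟩
    rw [gb_single]
    simp only [e, Finsupp.smul_single, smul_eq_mul, mul_one]
    congr 1
    · ext <;> simp
    · rw [hbez]; ring
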